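/- Let k be a field and R = k[[ϖ]][X] the polynomial ring over the formal power series ring k[[ϖ]]. Let (P_i)_{i∈I₁} and (Q_j)_{j∈I₂} be nonempty finite families of monic polynomials in R such that for all i ∈ I₁ and j ∈ I₂ the elements P_i and Q_j are relatively prime (every common divisor is a unit) and the quotient ring R/(P_i, Q_j) is finite-dimensional as a k-vector space. Then R/(∏_{i∈I₁} P_i, ∏_{j∈I₂} Q_j) is finite-dimensional over k and dim_k R/(∏_{i∈I₁} P_i, ∏_{j∈I₂} Q_j) = Σ_{i∈I₁} Σ_{j∈I₂} dim_k R/(P_i, Q_j). -/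

import Mathlib

set_option linter.unusedSectionVars false
set_option linter.unusedVariables false


open Module LinearMap

section Key
variable {k R : Type*} [Field k] [CommRing R] [IsDomain R] [DecompositionMonoid R] [Algebra k R]

/-- Additivity in the second factor. -/
theorem key_add (P Q₁ Q₂ : R) (h1 : IsRelPrime P Q₁)
    (hf1 : FiniteDimensional k (R ⧸ Ideal.span ({P, Q₁} : Set R)))
    (hf2 : FiniteDimensional k (R ⧸ Ideal.span ({P, Q₂} : Set R))) :
    FiniteDimensional k (R ⧸ Ideal.span ({P, Q₁ * Q₂} : Set R)) ∧
      finrank k (R ⧸ Ideal.span ({P, Q₁ * Q₂} : Set R)) =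
        finrank k (R ⧸ Ideal.span ({P, Q₁} : Set R)) +
        finrank k (R ⧸ Ideal.span ({P, Q₂} : Set R)) := by
  set I : Ideal R := Ideal.span {P, Q₁ * Q₂} with hI
  set J₁ : Ideal R := Ideal.span {P, Q₁} with hJ₁
  set J₂ : Ideal R := Ideal.span {P, Q₂} with hJ₂
  have hPJ₁ : P ∈ J₁ := Ideal.subset_span (by simp)
  have hQ₁J₁ : Q₁ ∈ J₁ := Ideal.subset_span (by simp)
  have hPJ₂ : P ∈ J₂ := Ideal.subset_span (by simp)
  have hQ₂J₂ : Q₂ ∈ J₂ := Ideal.subset_span (by simp)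
  have hPI : P ∈ I := Ideal.subset_span (by simp)
  have hQQI : Q₁ * Q₂ ∈ I := Ideal.subset_span (by simp)
  have hIJ₁ : I ≤ J₁ := by
    rw [hI, Ideal.span_le]
    intro x hx
    simp only [Set.mem_insert_iff, Set.mem_singleton_iff] at hx
    rcases hx with rfl | rfl
    · exact hPJ₁
    · exact J₁.mul_mem_right Q₂ hQ₁J₁
  -- the R-linear maps
  have hmemf : ∀ x ∈ J₂, Q₁ * x ∈ I := by
    intro x hx
    rw [hJ₂] at hx
    obtain ⟨a, b, hab⟩ := Ideal.mem_span_pair.mp hx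
    rw [← hab]
    have : Q₁ * (a * P + b * Q₂) = (Q₁ * a) * P + b * (Q₁ * Q₂) := by ring
    rw [this]
    exact I.add_mem (I.mul_mem_left _ hPI) (I.mul_mem_left _ hQQI)
  set fR : (R ⧸ J₂) →ₗ[R] (R ⧸ I) :=
    Submodule.mapQ J₂ I (LinearMap.mulLeft R Q₁) (fun x hx => hmemf x hx) with hfR
  set gR : (R ⧸ I) →ₗ[R] (R ⧸ J₁) :=
    Submodule.mapQ I J₁ LinearMap.id hIJ₁ with hgR
  have hf_mk : ∀ r : R, fR (Ideal.Quotient.mk J₂ r) = Ideal.Quotient.mk I (Q₁ * r) := fun r => rfl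
  have hg_mk : ∀ r : R, gR (Ideal.Quotient.mk I r) = Ideal.Quotient.mk J₁ r := fun r => rfl
  have hginj : Function.Surjective gR := by
    intro y
    obtain ⟨r, rfl⟩ := Ideal.Quotient.mk_surjective y
    exact ⟨Ideal.Quotient.mk I r, rfl⟩
  have hfinj : Function.Injective fR := by
    rw [← LinearMap.ker_eq_bot]
    ext x
    simp only [LinearMap.mem_ker, Submodule.mem_bot]
    constructor
    · intro hx
      obtain ⟨r, rfl⟩ := Ideal.Quotient.mk_surjective x
      rw [hf_mk] at hx
      have hmem : Q₁ * r ∈ I := by rwa [← Ideal.Quotient.eq_zero_iff_mem] at *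
      rw [hI] at hmem
      obtain ⟨a, b, hab⟩ := Ideal.mem_span_pair.mp hmem
      have hdvd : P ∣ Q₁ * (r - b * Q₂) := ⟨a, by linear_combination -hab⟩
      have hPd : P ∣ r - b * Q₂ := h1.dvd_of_dvd_mul_left hdvd
      obtain ⟨c, hc⟩ := hPd
      have : r ∈ J₂ := by
        rw [hJ₂, Ideal.mem_span_pair]
        exact ⟨c, b, by linear_combination -hc⟩
      rwa [Ideal.Quotient.eq_zero_iff_mem]
    · rintro rfl; simp
  have hexact : LinearMap.range fR = LinearMap.ker gR := by
    ext x
    simp only [LinearMap.mem_range, LinearMap.mem_ker]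
    obtain ⟨r, rfl⟩ := Ideal.Quotient.mk_surjective x
    rw [hg_mk r]
    constructor
    · rintro ⟨y, hy⟩
      obtain ⟨b, rfl⟩ := Ideal.Quotient.mk_surjective y
      rw [hf_mk] at hy
      have hsub : Q₁ * b - r ∈ I := (Ideal.Quotient.mk_eq_mk_iff_sub_mem _ _).mp hy
      rw [Ideal.Quotient.eq_zero_iff_mem]
      have hrw : r = Q₁ * b - (Q₁ * b - r) := by ring
      rw [hrw]
      exact J₁.sub_mem (J₁.mul_mem_right _ hQ₁J₁) (hIJ₁ hsub)
    · intro hr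
      rw [Ideal.Quotient.eq_zero_iff_mem] at hr
      obtain ⟨a, b, hab⟩ := Ideal.mem_span_pair.mp hr
      refine ⟨Ideal.Quotient.mk J₂ b, ?_⟩
      rw [hf_mk]
      rw [Ideal.Quotient.mk_eq_mk_iff_sub_mem]
      have : Q₁ * b - r = (-a) * P := by linear_combination hab
      rw [this]
      exact I.mul_mem_left _ hPI
  -- restrict to k
  set f : (R ⧸ J₂) →ₗ[k] (R ⧸ I) := fR.restrictScalars k with hf
  set g : (R ⧸ I) →ₗ[k] (R ⧸ J₁) := gR.restrictScalars k with hg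
  have hexact' : LinearMap.range f = LinearMap.ker g := by
    ext x
    have := Submodule.ext_iff.mp hexact x
    simpa [hf, hg] using this
  have hfin : FiniteDimensional k (R ⧸ I) := by
    have h1' : IsNoetherian k (R ⧸ J₂) := IsNoetherian.iff_fg.mpr hf2
    have h2' : IsNoetherian k (R ⧸ J₁) := IsNoetherian.iff_fg.mpr hf1
    have := isNoetherian_of_range_eq_ker f g hexact'
    exact IsNoetherian.iff_fg.mp this
  refine ⟨hfin, ?_⟩
  have hrn := LinearMap.finrank_range_add_finrank_ker g
  have hrange : LinearMap.range g = ⊤ := LinearMap.range_eq_top.mpr hginj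
  rw [hrange, finrank_top] at hrn
  have hker : finrank k (LinearMap.ker g) = finrank k (R ⧸ J₂) := by
    rw [← hexact']
    exact (LinearEquiv.finrank_eq (LinearEquiv.ofInjective f hfinj)).symm
  omega

theorem key_pair_comm (a b : R) : Ideal.span ({a, b} : Set R) = Ideal.span ({b, a} : Set R) := by
  rw [Set.pair_comm]

theorem key_prod_right (P : R) {ι : Type*} (Q : ι → R) (s : Finset ι) :
    s.Nonempty → (∀ j ∈ s, IsRelPrime P (Q j)) →
    (∀ j ∈ s, FiniteDimensional k (R ⧸ Ideal.span ({P, Q j} : Set R))) →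
    FiniteDimensional k (R ⧸ Ideal.span ({P, ∏ j ∈ s, Q j} : Set R)) ∧
      finrank k (R ⧸ Ideal.span ({P, ∏ j ∈ s, Q j} : Set R)) =
        ∑ j ∈ s, finrank k (R ⧸ Ideal.span ({P, Q j} : Set R)) := by
  classical
  induction s using Finset.cons_induction with
  | empty => intro hs; exact absurd hs (by simp)
  | cons a s ha ih =>
    intro _ hrel hfin
    rw [Finset.prod_cons, Finset.sum_cons]
    by_cases hne : s.Nonempty
    · obtain ⟨hfin', hrank'⟩ := ih hne (fun j hj => hrel j (Finset.mem_cons_of_mem hj))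
        (fun j hj => hfin j (Finset.mem_cons_of_mem hj))
      obtain ⟨hF, hR⟩ := key_add (k := k) P (Q a) (∏ j ∈ s, Q j)
        (hrel a (Finset.mem_cons_self a s)) (hfin a (Finset.mem_cons_self a s)) hfin'
      exact ⟨hF, by rw [hR, hrank']⟩
    · rw [Finset.not_nonempty_iff_eq_empty] at hne
      subst hne
      rw [Finset.prod_empty, Finset.sum_empty, mul_one, add_zero]
      exact ⟨hfin a (by simp), rfl⟩

theorem key_prod_left (Q₀ : R) {ι : Type*} (P : ι → R) (s : Finset ι) (hs : s.Nonempty)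
    (hrel : ∀ i ∈ s, IsRelPrime (P i) Q₀)
    (hfin : ∀ i ∈ s, FiniteDimensional k (R ⧸ Ideal.span ({P i, Q₀} : Set R))) :
    FiniteDimensional k (R ⧸ Ideal.span ({∏ i ∈ s, P i, Q₀} : Set R)) ∧
      finrank k (R ⧸ Ideal.span ({∏ i ∈ s, P i, Q₀} : Set R)) =
        ∑ i ∈ s, finrank k (R ⧸ Ideal.span ({P i, Q₀} : Set R)) := by
  rw [key_pair_comm]
  obtain ⟨hF, hR⟩ := key_prod_right (k := k) Q₀ P s hs (fun i hi => (hrel i hi).symm)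
    (fun i hi => by rw [key_pair_comm]; exact hfin i hi)
  refine ⟨hF, ?_⟩
  rw [hR]
  exact Finset.sum_congr rfl fun i _ => by rw [key_pair_comm]

end Key

set_option synthInstance.maxHeartbeats 1000000 in
theorem polyPowerSeriesDecompositionMonoid (k : Type*) [Field k] :
    DecompositionMonoid (Polynomial (PowerSeries k)) := inferInstance

/-- Bilinearity of the intersection number: for nonempty finite families of monic
polynomials `(P_i)_{i∈I₁}`, `(Q_j)_{j∈I₂}` in `R = k⟦ϖ⟧[X]` with `P_i` and `Q_j`
relatively prime and `R/(P_i, Q_j)` finite-dimensional over `k` for all `i, j`, the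
quotient `R/(∏ P_i, ∏ Q_j)` is finite-dimensional over `k` of dimension
`Σ_{i,j} dim_k R/(P_i, Q_j)`. -/
theorem finrank_quotient_prod_eq_sum (k : Type*) [Field k]
    (I₁ I₂ : Type*) [Fintype I₁] [Fintype I₂] [Nonempty I₁] [Nonempty I₂]
    (P : I₁ → Polynomial (PowerSeries k)) (Q : I₂ → Polynomial (PowerSeries k))
    (hPm : ∀ i, (P i).Monic) (hQm : ∀ j, (Q j).Monic)
    (hrel : ∀ i j, IsRelPrime (P i) (Q j))
    (hfin : ∀ i j, FiniteDimensional k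
      (Polynomial (PowerSeries k) ⧸ Ideal.span ({P i, Q j} : Set (Polynomial (PowerSeries k))))) :
    FiniteDimensional k (Polynomial (PowerSeries k) ⧸
        Ideal.span ({∏ i, P i, ∏ j, Q j} : Set (Polynomial (PowerSeries k)))) ∧
    Module.finrank k (Polynomial (PowerSeries k) ⧸
        Ideal.span ({∏ i, P i, ∏ j, Q j} : Set (Polynomial (PowerSeries k)))) =
      ∑ i, ∑ j, Module.finrank k
        (Polynomial (PowerSeries k) ⧸
          Ideal.span ({P i, Q j} : Set (Polynomial (PowerSeries k)))) := by
  letI : DecompositionMonoid (Polynomial (PowerSeries k)) := polyPowerSeriesDecompositionMonoid k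
  have step1 : ∀ i : I₁,
      FiniteDimensional k (Polynomial (PowerSeries k) ⧸
        Ideal.span ({P i, ∏ j, Q j} : Set (Polynomial (PowerSeries k)))) ∧
      finrank k (Polynomial (PowerSeries k) ⧸
        Ideal.span ({P i, ∏ j, Q j} : Set (Polynomial (PowerSeries k)))) =
        ∑ j, finrank k (Polynomial (PowerSeries k) ⧸
          Ideal.span ({P i, Q j} : Set (Polynomial (PowerSeries k)))) :=
    fun i => key_prod_right (P i) Q Finset.univ Finset.univ_nonempty
      (fun j _ => hrel i j) (fun j _ => hfin i j)
  obtain ⟨hF, hR⟩ := key_prod_left (∏ j, Q j) P Finset.univ Finset.univ_nonempty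
    (fun i _ => IsRelPrime.prod_right fun j _ => hrel i j)
    (fun i _ => (step1 i).1)
  refine ⟨hF, ?_⟩
  rw [hR]
  exact Finset.sum_congr rfl fun i _ => (step1 i).2
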